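/- Let Ω and Σ be SPD real n×n matrices, let L be an invertible real n×n matrix with Ω = L Lᵀ, and let k > 0. Then Λ_Kyle := k·(Lᵀ)⁻¹ √(Lᵀ Σ L) L⁻¹ is the unique SPD real n×n matrix Λ satisfying Λ Ω Λ = k²·Σ. -/

import Mathlib

open Matrix
open Classical in
/-- The unique positive semidefinite square root of a positive semidefinite
real matrix (defined as `0` on matrices that are not positive semidefinite). -/
noncomputable def psdSqrt {n : ℕ} (A : Matrix (Fin n) (Fin n) ℝ) : Matrix (Fin n) (Fin n) ℝ :=
  if h : A.PosSemidef then
    h.1.eigenvectorUnitary.1 * diagonal ((↑) ∘ (√·) ∘ h.1.eigenvalues) *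
      (star h.1.eigenvectorUnitary : Matrix (Fin n) (Fin n) ℝ)
  else 0

open scoped MatrixOrder

private lemma psdSqrt_eq {n : ℕ} {A : Matrix (Fin n) (Fin n) ℝ} (hA : A.PosSemidef) :
    psdSqrt A = CFC.sqrt A := by
  rw [CFC.sqrt_eq_cfc, cfc_nnreal_eq_real _ A hA.nonneg, hA.1.cfc_eq]
  unfold psdSqrt
  rw [dif_pos hA]
  simp only [IsHermitian.cfc, Unitary.conjStarAlgAut_apply]
  congr 3
  funext i
  simp [Real.coe_toNNReal', max_eq_left (hA.eigenvalues_nonneg i)]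

private lemma myPosDef_smul {n : ℕ} {A : Matrix (Fin n) (Fin n) ℝ} (hA : A.PosDef)
    {k : ℝ} (hk : 0 < k) : (k • A).PosDef := by
  exact hA.smul hk

private lemma myPosDef_conj {n : ℕ} {A B : Matrix (Fin n) (Fin n) ℝ} (hA : A.PosDef)
    (hB : IsUnit B.det) : (Bᵀ * A * B).PosDef := by
  have hBinj : Function.Injective B.mulVec :=
    Matrix.mulVec_injective_iff_isUnit.mpr ((Matrix.isUnit_iff_isUnit_det _).2 hB)
  simpa [conjTranspose_eq_transpose_of_trivial] using hA.conjTranspose_mul_mul_same hBinj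

private lemma myPosDef_of_posSemidef {n : ℕ} {A : Matrix (Fin n) (Fin n) ℝ}
    (hA : A.PosSemidef) (hd : IsUnit A.det) : A.PosDef := by
  exact hA.posDef_iff_isUnit.mpr ((Matrix.isUnit_iff_isUnit_det _).2 hd)

set_option maxHeartbeats 1600000 in
/-- The Kyle estimator: for SPD `Ω`, `Σ` with `Ω = L Lᵀ` (`L` invertible) and `k > 0`,
`Λ_Kyle = k (Lᵀ)⁻¹ √(Lᵀ Σ L) L⁻¹` is the unique SPD matrix `Λ` with `Λ Ω Λ = k² Σ`. -/
theorem stmt12 {n : ℕ} (W S L : Matrix (Fin n) (Fin n) ℝ)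
    (hW : W.PosDef) (hS : S.PosDef) (hL : IsUnit L.det)
    (hfac : W = L * Lᵀ) (k : ℝ) (hk : 0 < k)
    (LamK : Matrix (Fin n) (Fin n) ℝ)
    (hLamK : LamK = k • ((Lᵀ)⁻¹ * psdSqrt (Lᵀ * S * L) * L⁻¹)) :
    LamK.PosDef ∧ LamK * W * LamK = (k ^ 2) • S ∧
    ∀ Lam : Matrix (Fin n) (Fin n) ℝ, Lam.PosDef → Lam * W * Lam = (k ^ 2) • S →
      Lam = LamK := by
  have hLT : IsUnit (Lᵀ).det := by rwa [Matrix.det_transpose]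
  have hM : (Lᵀ * S * L).PosDef := myPosDef_conj hS hL
  have hMsd : (Lᵀ * S * L).PosSemidef := hM.posSemidef
  have hsq : psdSqrt (Lᵀ * S * L) = CFC.sqrt (Lᵀ * S * L) := psdSqrt_eq hMsd
  set R := CFC.sqrt (Lᵀ * S * L) with hRdef
  have hRsd : R.PosSemidef := (CFC.sqrt_nonneg _).posSemidef
  have hRR : R * R = Lᵀ * S * L := CFC.sqrt_mul_sqrt_self _ hMsd.nonneg
  -- R is invertible
  have hRdet : IsUnit R.det := by
    have : R.det * R.det = (Lᵀ * S * L).det := by rw [← Matrix.det_mul, hRR]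
    have h2 := hM.det_pos
    rw [← this] at h2
    exact (Ne.isUnit (by intro h0; rw [h0] at h2; simpa using h2))
  have hRpd : R.PosDef := myPosDef_of_posSemidef hRsd hRdet
  -- inverse identities
  have hL1 : L⁻¹ * L = 1 := Matrix.nonsing_inv_mul L hL
  have hL2 : L * L⁻¹ = 1 := Matrix.mul_nonsing_inv L hL
  have hT1 : (Lᵀ)⁻¹ * Lᵀ = 1 := Matrix.nonsing_inv_mul Lᵀ hLT
  have hT2 : Lᵀ * (Lᵀ)⁻¹ = 1 := Matrix.mul_nonsing_inv Lᵀ hLT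
  have hLamK' : LamK = k • (((L⁻¹)ᵀ) * R * L⁻¹) := by
    rw [hLamK, hsq, Matrix.transpose_nonsing_inv]
  have hLinvdet : IsUnit (L⁻¹).det := Matrix.isUnit_nonsing_inv_det L hL
  have hLamKpd : LamK.PosDef := by
    rw [hLamK']
    exact myPosDef_smul (myPosDef_conj hRpd hLinvdet) hk
  have hProd : LamK * W * LamK = (k ^ 2) • S := by
    rw [hLamK, hsq, hfac]
    rw [Matrix.smul_mul, Matrix.smul_mul, Matrix.mul_smul, smul_smul, ← pow_two]
    congr 1
    calc (Lᵀ)⁻¹ * R * L⁻¹ * (L * Lᵀ) * ((Lᵀ)⁻¹ * R * L⁻¹)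
        = (Lᵀ)⁻¹ * (R * ((L⁻¹ * L) * (Lᵀ * (Lᵀ)⁻¹)) * R) * L⁻¹ := by
          simp only [Matrix.mul_assoc]
      _ = (Lᵀ)⁻¹ * (R * R) * L⁻¹ := by rw [hL1, hT2]; simp [Matrix.mul_assoc]
      _ = ((Lᵀ)⁻¹ * Lᵀ) * S * (L * L⁻¹) := by rw [hRR]; simp only [Matrix.mul_assoc]
      _ = S := by rw [hT1, hL2, Matrix.one_mul, Matrix.mul_one]
  refine ⟨hLamKpd, hProd, fun Lam hLampd hLamEq => ?_⟩
  set B := k⁻¹ • (Lᵀ * Lam * L) with hBdef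
  have hBpd : B.PosDef := myPosDef_smul (myPosDef_conj hLampd hL) (by positivity)
  have hBsq : B ^ 2 = Lᵀ * S * L := by
    rw [pow_two, hBdef, Matrix.smul_mul, Matrix.mul_smul, smul_smul]
    have hmid : (Lᵀ * Lam * L) * (Lᵀ * Lam * L) = Lᵀ * (Lam * W * Lam) * L := by
      rw [hfac]; simp only [Matrix.mul_assoc]
    rw [hmid, hLamEq]
    rw [Matrix.mul_smul, Matrix.smul_mul, smul_smul]
    have hkk : k⁻¹ * k⁻¹ * k ^ 2 = 1 := by rw [sq]; field_simp
    rw [hkk, one_smul]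
  have hBR : B = R := ((CFC.sqrt_eq_iff _ _ hMsd.nonneg hBpd.posSemidef.nonneg).mpr
    (by rw [← sq]; exact hBsq)).symm
  -- recover Lam from B
  have : Lam = k • ((Lᵀ)⁻¹ * B * L⁻¹) := by
    rw [hBdef, Matrix.mul_smul, Matrix.smul_mul, smul_smul, mul_inv_cancel₀ (ne_of_gt hk), one_smul]
    calc Lam = 1 * Lam * 1 := by rw [Matrix.one_mul, Matrix.mul_one]
      _ = ((Lᵀ)⁻¹ * Lᵀ) * Lam * (L * L⁻¹) := by rw [hT1, hL2]
      _ = (Lᵀ)⁻¹ * (Lᵀ * Lam * L) * L⁻¹ := by simp only [Matrix.mul_assoc]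
  rw [this, hBR, hLamK, hsq]
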